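/- With ℓ(λ) = Σ_{α ∈ Φ⁺} |⟨λ, α⟩| as above, if there exists α ∈ Φ⁺ with ⟨μ₁, α⟩⟨μ₂, α⟩ < 0, then ℓ(μ₁) + ℓ(μ₂) − ℓ(μ₁ + μ₂) ≥ 2. -/

import Mathlib

/-- With `ℓ (λ) = ∑_{α ∈ Φ⁺} |⟨λ, α⟩|`, if some positive root `α` satisfies
`⟨μ₁, α⟩⟨μ₂, α⟩ < 0`, then `ℓ μ₁ + ℓ μ₂ − ℓ (μ₁ + μ₂) ≥ 2`. -/
theorem stmt2 {X A : Type*} [AddCommGroup X] (Φplus : Finset A)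
    (pair : X →+ A → ℤ) (ℓ : X → ℤ)
    (hℓ : ∀ x : X, ℓ x = ∑ a ∈ Φplus, |pair x a|) (μ₁ μ₂ : X)
    (h : ∃ a ∈ Φplus, pair μ₁ a * pair μ₂ a < 0) :
    2 ≤ ℓ μ₁ + ℓ μ₂ - ℓ (μ₁ + μ₂) := by
  obtain ⟨a₀, ha₀, hmul⟩ := h
  have key : ∀ x y : ℤ, x * y < 0 → 2 ≤ |x| + |y| - |x + y| := by
    intro x y hxy
    rcases mul_neg_iff.mp hxy with ⟨hx, hy⟩ | ⟨hx, hy⟩ <;>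
      rcases le_or_gt 0 (x + y) with hs | hs <;>
      simp only [abs_of_pos, abs_of_neg, abs_of_nonneg, *] <;> omega
  simp only [hℓ, map_add, Pi.add_apply]
  rw [← Finset.sum_add_distrib, ← Finset.sum_sub_distrib]
  calc (2 : ℤ) ≤ |pair μ₁ a₀| + |pair μ₂ a₀| - |pair μ₁ a₀ + pair μ₂ a₀| := key _ _ hmul
    _ ≤ _ := Finset.single_le_sum (f := fun i => |pair μ₁ i| + |pair μ₂ i| - |pair μ₁ i + pair μ₂ i|) (fun i _ => by
        have := abs_add_le (pair μ₁ i) (pair μ₂ i); omega) ha₀
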